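/- arXiv:1012.1906 — 2 statements merged into one kernel-verified Lean document; each statement's English description precedes it below -/
import Mathlib

section
/- The two-dimensional polynomial sequence 0 → ℝ → S_K →^curl BDM₁(K) →^div P₀(K) → 0 is exact, where S_K = P₂ + span{x²y, xy²} is the serendipity space. -/
/-- The 2D `BDM₁` space `P₁² + span{curl(x²y), curl(xy²)}`. -/
def BDM1 : Set ((ℝ × ℝ) → ℝ × ℝ) :=
  {q | ∃ a0 a1 a2 b0 b1 b2 r s : ℝ, ∀ p : ℝ × ℝ,
    q p = (a0 + a1 * p.1 + a2 * p.2 + r * p.1 ^ 2 + s * (2 * p.1 * p.2),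
           b0 + b1 * p.1 + b2 * p.2 - r * (2 * p.1 * p.2) - s * p.2 ^ 2)}

/-- The serendipity space `S_K = P₂ + span{x²y, xy²}`. -/
def SK : Set ((ℝ × ℝ) → ℝ) :=
  {s | ∃ a b c d e f α β : ℝ, ∀ p : ℝ × ℝ,
    s p = a + b * p.1 + c * p.2 + d * p.1 ^ 2 + e * p.1 * p.2 + f * p.2 ^ 2
      + α * p.1 ^ 2 * p.2 + β * p.1 * p.2 ^ 2}

/-- `curl u = (∂₂u, −∂₁u)` for a scalar function `u` -/
noncomputable def curl2 (s : (ℝ × ℝ) → ℝ) : (ℝ × ℝ) → ℝ × ℝ :=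
  fun p => (deriv (fun t => s (p.1, t)) p.2, -deriv (fun t => s (t, p.2)) p.1)

/-- the divergence `∂₁q₁ + ∂₂q₂` -/
noncomputable def dv (q : (ℝ × ℝ) → ℝ × ℝ) : (ℝ × ℝ) → ℝ :=
  fun p => deriv (fun t => (q (t, p.2)).1) p.1 + deriv (fun t => (q (p.1, t)).2) p.2

lemma deriv_quad (A B C x : ℝ) :
    deriv (fun t : ℝ => A + B * t + C * t ^ 2) x = B + C * (2 * x) := by
  have h2 : HasDerivAt (fun t : ℝ => t ^ 2) (2 * x) x := by
    simpa using hasDerivAt_pow 2 x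
  have h : HasDerivAt (fun t : ℝ => A + B * t + C * t ^ 2) (B + C * (2 * x)) x := by
    have h' := ((hasDerivAt_const x A).add ((hasDerivAt_id x).const_mul B)).add
      (h2.const_mul C)
    simp at h'
    exact h'
  exact h.deriv

lemma curl2_eval (s : (ℝ × ℝ) → ℝ) (a b c d e f α β : ℝ)
    (hs : ∀ p : ℝ × ℝ,
      s p = a + b * p.1 + c * p.2 + d * p.1 ^ 2 + e * p.1 * p.2 + f * p.2 ^ 2
        + α * p.1 ^ 2 * p.2 + β * p.1 * p.2 ^ 2) (p : ℝ × ℝ) :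
    curl2 s p = (c + e * p.1 + f * (2 * p.2) + α * p.1 ^ 2 + β * (p.1 * (2 * p.2)),
      -(b + d * (2 * p.1) + e * p.2 + α * (p.2 * (2 * p.1)) + β * p.2 ^ 2)) := by
  unfold curl2
  have h1 : (fun t => s (p.1, t)) = fun t : ℝ =>
      (a + b * p.1 + d * p.1 ^ 2) + (c + e * p.1 + α * p.1 ^ 2) * t + (f + β * p.1) * t ^ 2 := by
    funext t; rw [hs]; ring
  have h2 : (fun t => s (t, p.2)) = fun t : ℝ =>
      (a + c * p.2 + f * p.2 ^ 2) + (b + e * p.2 + β * p.2 ^ 2) * t + (d + α * p.2) * t ^ 2 := by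
    funext t; rw [hs]; ring
  rw [h1, h2, deriv_quad, deriv_quad]
  simp only [Prod.mk.injEq]
  constructor <;> ring

lemma dv_eval (q : (ℝ × ℝ) → ℝ × ℝ) (a0 a1 a2 b0 b1 b2 r s : ℝ)
    (hq : ∀ p : ℝ × ℝ,
      q p = (a0 + a1 * p.1 + a2 * p.2 + r * p.1 ^ 2 + s * (2 * p.1 * p.2),
             b0 + b1 * p.1 + b2 * p.2 - r * (2 * p.1 * p.2) - s * p.2 ^ 2)) (p : ℝ × ℝ) :
    dv q p = a1 + b2 := by
  unfold dv
  have h1 : (fun t => (q (t, p.2)).1) = fun t : ℝ =>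
      (a0 + a2 * p.2) + (a1 + s * (2 * p.2)) * t + r * t ^ 2 := by
    funext t; rw [hq]; ring
  have h2 : (fun t => (q (p.1, t)).2) = fun t : ℝ =>
      (b0 + b1 * p.1) + (b2 - r * (2 * p.1)) * t + (-s) * t ^ 2 := by
    funext t; rw [hq]; ring
  rw [h1, h2, deriv_quad, deriv_quad]
  ring

/-- Exactness of `0 → ℝ → S_K → BDM₁ → P₀ → 0`: the kernel of `curl` on `S_K`
is the constants, the image of `curl` is the kernel of `div` in `BDM₁`, and
`div` maps `BDM₁` onto the constants. -/
theorem stmt_5 :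
    ({s ∈ SK | curl2 s = fun _ => (0, 0)} = {s | ∃ c : ℝ, s = fun _ => c}) ∧
    ({q | ∃ s ∈ SK, q = curl2 s} = {q ∈ BDM1 | dv q = fun _ => 0}) ∧
    ({g : (ℝ × ℝ) → ℝ | ∃ q ∈ BDM1, g = dv q} = {g | ∃ c : ℝ, g = fun _ => c}) := by
  refine ⟨?_, ?_, ?_⟩
  · -- kernel of curl on SK is constants
    ext s
    simp only [Set.mem_setOf_eq, Set.mem_sep_iff]
    constructor
    · rintro ⟨⟨a, b, c, d, e, f, α, β, hs⟩, hc⟩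
      have E : ∀ x y : ℝ,
          c + e * x + f * (2 * y) + α * x ^ 2 + β * (x * (2 * y)) = 0 ∧
          -(b + d * (2 * x) + e * y + α * (y * (2 * x)) + β * y ^ 2) = 0 := by
        intro x y
        have h := (curl2_eval s a b c d e f α β hs (x, y)).symm.trans (congrFun hc (x, y))
        simpa [Prod.ext_iff] using h
      have e1 := (E 0 0).1
      have e2 := (E 1 0).1
      have e3 := (E (-1) 0).1
      have e4 := (E 0 1).1
      have e5 := (E 0 0).2
      have e6 := (E 1 0).2
      have e7 := (E (-1) 0).2
      have e8 := (E 0 1).2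
      have e9 := (E 0 (-1)).2
      have e10 := (E 1 1).2
      norm_num at e1 e2 e3 e4 e5 e6 e7 e8 e9 e10
      have hb : b = 0 := by linarith
      have hc0 : c = 0 := by linarith
      have hd : d = 0 := by linarith
      have he : e = 0 := by linarith
      have hβ : β = 0 := by linarith
      have hα : α = 0 := by linarith
      have hf : f = 0 := by linarith
      refine ⟨a, funext fun p => ?_⟩
      rw [hs, hb, hc0, hd, he, hf, hα, hβ]; ring
    · rintro ⟨c, rfl⟩
      refine ⟨⟨c, 0, 0, 0, 0, 0, 0, 0, fun p => by ring⟩, ?_⟩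
      funext p
      have := curl2_eval (fun _ => c) c 0 0 0 0 0 0 0 (fun p => by ring) p
      rw [this]; norm_num
  · -- image of curl = kernel of div in BDM1
    ext q
    simp only [Set.mem_setOf_eq, Set.mem_sep_iff]
    constructor
    · rintro ⟨s, ⟨a, b, c, d, e, f, α, β, hs⟩, rfl⟩
      have hq : ∀ p : ℝ × ℝ, curl2 s p =
          (c + e * p.1 + (2 * f) * p.2 + α * p.1 ^ 2 + β * (2 * p.1 * p.2),
           (-b) + (-(2 * d)) * p.1 + (-e) * p.2 - α * (2 * p.1 * p.2) - β * p.2 ^ 2) := by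
        intro p
        rw [curl2_eval s a b c d e f α β hs p]
        simp only [Prod.mk.injEq]; constructor <;> ring
      refine ⟨⟨c, e, 2 * f, -b, -(2 * d), -e, α, β, hq⟩, ?_⟩
      funext p
      rw [dv_eval (curl2 s) c e (2 * f) (-b) (-(2 * d)) (-e) α β hq p]; ring
    · rintro ⟨⟨a0, a1, a2, b0, b1, b2, r, sc, hq⟩, hdv⟩
      have hab : a1 + b2 = 0 := by
        have h := congrFun hdv (0, 0)
        rwa [dv_eval q a0 a1 a2 b0 b1 b2 r sc hq (0, 0)] at h
      refine ⟨fun p => -b0 * p.1 + a0 * p.2 + (-(b1 / 2)) * p.1 ^ 2 + a1 * p.1 * p.2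
        + (a2 / 2) * p.2 ^ 2 + r * p.1 ^ 2 * p.2 + sc * p.1 * p.2 ^ 2,
        ⟨0, -b0, a0, -(b1 / 2), a1, a2 / 2, r, sc, fun p => by ring⟩, ?_⟩
      funext p
      rw [hq p, curl2_eval _ 0 (-b0) a0 (-(b1 / 2)) a1 (a2 / 2) r sc
        (fun p => by ring) p]
      simp only [Prod.mk.injEq]
      constructor
      · ring
      · linear_combination p.2 * hab
  · -- div maps BDM1 onto constants
    ext g
    simp only [Set.mem_setOf_eq]
    constructor
    · rintro ⟨q, ⟨a0, a1, a2, b0, b1, b2, r, sc, hq⟩, rfl⟩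
      exact ⟨a1 + b2, funext fun p => dv_eval q a0 a1 a2 b0 b1 b2 r sc hq p⟩
    · rintro ⟨c, rfl⟩
      refine ⟨fun p => (c * p.1, 0), ⟨0, c, 0, 0, 0, 0, 0, 0, fun p => ?_⟩, ?_⟩
      · simp only [Prod.mk.injEq]; constructor <;> ring
      · funext p
        rw [dv_eval _ 0 c 0 0 0 0 0 0 (fun p => by
          simp only [Prod.mk.injEq]; constructor <;> ring) p]
        ring
end

section
/- The degrees of freedom for BDM₁ on an edge are unisolvent: a vector field q ∈ BDM₁(K) on the unit square is uniquely determined by the moments ∫_e (q·n)·p₁ ds over each of the four edges e and for all p₁ ∈ P₁(e). -/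
lemma int_quad (c0 c1 c2 : ℝ) :
    (∫ t in (0:ℝ)..1, (c0 + c1 * t + c2 * t ^ 2)) = c0 + c1 / 2 + c2 / 3 := by
  have i1 : IntervalIntegrable (fun t : ℝ => c0 + c1 * t) MeasureTheory.volume 0 1 :=
    (continuous_const.add (continuous_const.mul continuous_id)).intervalIntegrable 0 1
  have i2 : IntervalIntegrable (fun t : ℝ => c2 * t ^ 2) MeasureTheory.volume 0 1 :=
    (continuous_const.mul (continuous_pow 2)).intervalIntegrable 0 1
  have i3 : IntervalIntegrable (fun t : ℝ => (c0 : ℝ)) MeasureTheory.volume 0 1 :=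
    intervalIntegrable_const
  have i4 : IntervalIntegrable (fun t : ℝ => c1 * t) MeasureTheory.volume 0 1 :=
    (continuous_const.mul continuous_id).intervalIntegrable 0 1
  rw [intervalIntegral.integral_add i1 i2, intervalIntegral.integral_add i3 i4,
    intervalIntegral.integral_const, intervalIntegral.integral_const_mul,
    intervalIntegral.integral_const_mul, integral_id, integral_pow]
  norm_num
  ring

lemma key (f : ℝ → ℝ) (c0 c1 c2 : ℝ) (hf : ∀ t, f t = c0 + c1 * t + c2 * t ^ 2)
    (h0 : (∫ t in (0:ℝ)..1, f t) = 0) : c0 + c1 / 2 + c2 / 3 = 0 := by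
  have h2 : (∫ t in (0:ℝ)..1, f t) = ∫ t in (0:ℝ)..1, (c0 + c1 * t + c2 * t ^ 2) :=
    intervalIntegral.integral_congr fun t _ => hf t
  rw [h0, int_quad] at h2
  exact h2.symm

/-- Unisolvency of the `BDM₁` degrees of freedom on the unit square `K = [0,1]²`:
if `q ∈ BDM1(K)` has vanishing moments `∫_e (q·n) p₁ ds` of its normal component
against all `p₁ ∈ P₁(e)` on each of the four edges, then `q = 0`.
(Bottom edge: `n = (0,−1)`; right: `n = (1,0)`; top: `n = (0,1)`; left: `n = (−1,0)`.) -/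
theorem stmt_7 (q : (ℝ × ℝ) → ℝ × ℝ) (hq : q ∈ BDM1)
    (hbot : ∀ a b : ℝ, (∫ t in (0:ℝ)..1, (a + b * t) * (-(q (t, 0)).2)) = 0)
    (hright : ∀ a b : ℝ, (∫ t in (0:ℝ)..1, (a + b * t) * (q (1, t)).1) = 0)
    (htop : ∀ a b : ℝ, (∫ t in (0:ℝ)..1, (a + b * t) * (q (t, 1)).2) = 0)
    (hleft : ∀ a b : ℝ, (∫ t in (0:ℝ)..1, (a + b * t) * (-(q (0, t)).1)) = 0) :
    q = fun _ => (0, 0) := by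
  obtain ⟨a0, a1, a2, b0, b1, b2, r, s, h⟩ := hq
  have e1 := key _ (-b0) (-b1) 0 (fun t => by simp [h]; ring) (hbot 1 0)
  have e2 := key _ 0 (-b0) (-b1) (fun t => by simp [h]; ring) (hbot 0 1)
  have e3 := key _ (a0 + a1 + r) (a2 + 2 * s) 0 (fun t => by simp [h]; ring) (hright 1 0)
  have e4 := key _ 0 (a0 + a1 + r) (a2 + 2 * s) (fun t => by simp [h]; ring) (hright 0 1)
  have e5 := key _ (b0 + b2 - s) (b1 - 2 * r) 0 (fun t => by simp [h]; ring) (htop 1 0)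
  have e6 := key _ 0 (b0 + b2 - s) (b1 - 2 * r) (fun t => by simp [h]; ring) (htop 0 1)
  have e7 := key _ (-a0) (-a2) 0 (fun t => by simp [h]; ring) (hleft 1 0)
  have e8 := key _ 0 (-a0) (-a2) (fun t => by simp [h]; ring) (hleft 0 1)
  have hb0 : b0 = 0 := by linarith
  have hb1 : b1 = 0 := by linarith
  have ha0 : a0 = 0 := by linarith
  have ha2 : a2 = 0 := by linarith
  have hr : r = 0 := by linarith
  have hs : s = 0 := by linarith
  have ha1 : a1 = 0 := by linarith
  have hb2 : b2 = 0 := by linarith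
  funext p
  rw [h p, ha0, ha1, ha2, hb0, hb1, hb2, hr, hs]
  norm_num
end
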